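/- Let S be a commutative, cancellative monoid, s ∈ S, and m ∈ 𝒜(S) with s − m ∈ S and L(s) finite. If L(s) ≠ L(s − m) + 1, then for every finitely supported tuple (c_a) ∈ ℕ^{𝒜(S_red)∖{[m]}} such that s is associate to φ_S(c_a) and |(c_a)| = L(s), and for every (c_a') ∈ MinRepl_m(S) with (c_a') ≤ (c_a) coordinatewise, one has L(φ_S(c_a')) ≠ L(−m + φ_S(c_a')) + 1. -/

import Mathlib

namespace Paper

/-- The additive congruence on `S` identifying associate elements
(`s ∼ t` iff `s + u = t` for some additive unit `u`). -/
def assocCon (S : Type*) [AddCancelCommMonoid S] : AddCon S where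
  r s t := ∃ u : AddUnits S, s + (u : S) = t
  iseqv := by
    refine ⟨fun s => ⟨0, by simp⟩, ?_, ?_⟩
    · rintro s t ⟨u, rfl⟩
      exact ⟨-u, by rw [add_assoc, AddUnits.add_neg, add_zero]⟩
    · rintro s t w ⟨u, rfl⟩ ⟨v, rfl⟩
      exact ⟨u + v, by rw [AddUnits.val_add, add_assoc]⟩
  add' := by
    rintro a b c d ⟨u, rfl⟩ ⟨v, rfl⟩
    refine ⟨u + v, ?_⟩
    rw [AddUnits.val_add]
    abel

/-- The reduced monoid `S_red = S / U(S)`. -/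
abbrev Red (S : Type*) [AddCancelCommMonoid S] := (assocCon S).Quotient

variable {S : Type*} [AddCancelCommMonoid S]

/-- The class `[s]` of `s` in `S_red`. -/
def cls (s : S) : Red S := (assocCon S).mk' s

/-- `a` is an atom: a nonzero nonunit such that in any decomposition
`b + c = a`, one of `b`, `c` is a unit. -/
def IsAddAtom {M : Type*} [AddMonoid M] (a : M) : Prop :=
  a ≠ 0 ∧ ¬ IsAddUnit a ∧ ∀ b c : M, b + c = a → IsAddUnit b ∨ IsAddUnit c

/-- The length `|(c_a)|` of a tuple. -/
def flen (c : Red S →₀ ℕ) : ℕ := c.sum fun _ n => n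

/-- The factorization homomorphism `φ_S`. -/
def phi (c : Red S →₀ ℕ) : Red S := c.sum fun x n => n • x

/-- The set of factorizations `Z(s)`: finitely supported tuples indexed by the atoms
of `S_red` summing to `[s]`. -/
def ZSet (s : S) : Set (Red S →₀ ℕ) :=
  {c | (∀ x ∈ c.support, IsAddAtom x) ∧ phi c = cls s}

/-- The longest factorization length `L(s)`. -/
noncomputable def lenL (s : S) : ℕ := sSup (flen '' ZSet s)

/-- The shortest factorization length `ℓ(s)`. -/
noncomputable def lenl (s : S) : ℕ := sInf (flen '' ZSet s)

/-- `L(s)` is (defined and) finite. -/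
def LFinite (s : S) : Prop := (ZSet s).Nonempty ∧ BddAbove (flen '' ZSet s)

/-- `Repl_m(S)`: tuples over the atoms of `S_red` other than `[m]` whose evaluation,
after subtracting `m`, stays in `S`. -/
def ReplSet (m : S) : Set (Red S →₀ ℕ) :=
  {c | (∀ x ∈ c.support, IsAddAtom x ∧ x ≠ cls m) ∧ ∃ s t : S, cls s = phi c ∧ m + t = s}

/-- `MinRepl_m(S)`: the minimal elements of `Repl_m(S)` under the coordinatewise order. -/
def MinReplSet (m : S) : Set (Red S →₀ ℕ) :=
  {c ∈ ReplSet m | ∀ c' ∈ ReplSet m, c' ≤ c → c' = c}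

section Helpers

variable {S : Type*} [AddCancelCommMonoid S]

lemma cls_add (a b : S) : cls (a + b) = cls a + cls b := map_add _ a b

lemma cls_zero : (cls (0 : S) : Red S) = 0 := map_zero _

lemma cls_eq_iff {a b : S} : cls a = cls b ↔ ∃ u : AddUnits S, a + u = b :=
  (assocCon S).eq

lemma cls_surjective : Function.Surjective (cls : S → Red S) :=
  AddCon.mk'_surjective

lemma isAddUnit_of_cls {a : S} (h : IsAddUnit (cls a)) : IsAddUnit a := by
  obtain ⟨u, hu⟩ := h
  obtain ⟨b, hb⟩ := cls_surjective ((-u : AddUnits (Red S)) : Red S)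
  have : cls (a + b) = cls (0 : S) := by
    rw [cls_add, cls_zero, ← hu, hb, AddUnits.add_neg]
  obtain ⟨v, hv⟩ := cls_eq_iff.mp this
  exact IsAddUnit.of_add_eq_zero (a := a) (b + v) (by rw [← add_assoc]; exact hv)

lemma red_unit_eq_zero {x : Red S} (h : IsAddUnit x) : x = 0 := by
  obtain ⟨a, rfl⟩ := cls_surjective x
  obtain ⟨w, hw⟩ := isAddUnit_of_cls h
  rw [← cls_zero]
  exact cls_eq_iff.mpr ⟨-w, by rw [← hw, AddUnits.add_neg]⟩

lemma cls_atom {m : S} (hm : IsAddAtom m) : IsAddAtom (cls m) := by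
  refine ⟨?_, fun h => hm.2.1 (isAddUnit_of_cls h), ?_⟩
  · intro h
    rw [← cls_zero] at h
    obtain ⟨u, hu⟩ := cls_eq_iff.mp h
    exact hm.2.1 (IsAddUnit.of_add_eq_zero (a := m) (u : S) hu)
  · intro b c hbc
    obtain ⟨b', rfl⟩ := cls_surjective b
    obtain ⟨c', rfl⟩ := cls_surjective c
    rw [← cls_add] at hbc
    obtain ⟨u, hu⟩ := cls_eq_iff.mp hbc
    rcases hm.2.2 b' (c' + u) (by rw [← add_assoc]; exact hu) with h | h
    · exact Or.inl (h.map (assocCon S).mk')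
    · refine Or.inr ?_
      obtain ⟨w, hw⟩ := h
      have : c' + ((u : S) + (-w : AddUnits S)) = 0 := by
        rw [← add_assoc, ← hw, AddUnits.add_neg]
      exact (IsAddUnit.of_add_eq_zero (a := c') _ this).map (assocCon S).mk'

lemma phi_add (c d : Red S →₀ ℕ) : phi (c + d) = phi c + phi d :=
  Finsupp.sum_add_index' (fun a => zero_nsmul a) (fun a m n => add_nsmul a m n)

lemma phi_single (x : Red S) (n : ℕ) : phi (Finsupp.single x n) = n • x :=
  Finsupp.sum_single_index (zero_nsmul x)

lemma flen_add (c d : Red S →₀ ℕ) : flen (c + d) = flen c + flen d :=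
  Finsupp.sum_add_index' (fun _ => rfl) (fun _ _ _ => rfl)

lemma flen_single (x : Red S) (n : ℕ) : flen (Finsupp.single x n) = n :=
  Finsupp.sum_single_index rfl

lemma ZSet_congr {v w : S} (h : cls v = cls w) : ZSet v = ZSet w := by
  unfold ZSet; rw [h]

lemma mem_ZSet_add {z1 z2 : Red S →₀ ℕ} {v w : S} (h1 : z1 ∈ ZSet v)
    (h2 : z2 ∈ ZSet w) : z1 + z2 ∈ ZSet (v + w) := by
  classical
  refine ⟨fun x hx => ?_, by rw [phi_add, h1.2, h2.2, cls_add]⟩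
  rcases Finset.mem_union.mp (Finsupp.support_add hx) with h | h
  · exact h1.1 x h
  · exact h2.1 x h

lemma single_mem_ZSet {m : S} (hm : IsAddAtom m) :
    Finsupp.single (cls m) 1 ∈ ZSet m := by
  classical
  refine ⟨fun x hx => ?_, by rw [phi_single, one_nsmul]⟩
  rw [Finsupp.support_single_ne_zero _ one_ne_zero, Finset.mem_singleton] at hx
  subst hx
  exact cls_atom hm

lemma flen_le_lenL {z : Red S →₀ ℕ} {s : S} (hb : BddAbove (flen '' ZSet s))
    (hz : z ∈ ZSet s) : flen z ≤ lenL s :=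
  le_csSup hb ⟨z, hz, rfl⟩

lemma lenL_le {s : S} {n : ℕ} (h : ∀ z ∈ ZSet s, flen z ≤ n) : lenL s ≤ n :=
  csSup_le' (by rintro _ ⟨z, hz, rfl⟩; exact h z hz)

lemma exists_lenL {s : S} (hne : (ZSet s).Nonempty)
    (hb : BddAbove (flen '' ZSet s)) : ∃ z ∈ ZSet s, flen z = lenL s := by
  have := Nat.sSup_mem (hne.image flen) hb
  obtain ⟨z, hz, hz'⟩ := this
  exact ⟨z, hz, hz'⟩

end Helpers

theorem statement2' {S : Type*} [AddCancelCommMonoid S] (s m t : S)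
    (hm : IsAddAtom m) (ht : m + t = s) (hfin : LFinite s)
    (hne : lenL s ≠ lenL t + 1) :
    ∀ c : Red S →₀ ℕ, (∀ x ∈ c.support, IsAddAtom x ∧ x ≠ cls m) →
      cls s = phi c → flen c = lenL s →
      ∀ c' ∈ MinReplSet m, c' ≤ c →
        ∀ s' t' : S, cls s' = phi c' → m + t' = s' → lenL s' ≠ lenL t' + 1 := by
  classical
  intro c hc hcs hclen c' _hc'min hle s' t' hs' ht' hcontra
  obtain ⟨_, hbdd⟩ := hfin
  set d : Red S →₀ ℕ := c - c' with hd
  have hcd : c' + d = c := add_tsub_cancel_of_le hle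
  obtain ⟨r, hr⟩ := cls_surjective (phi d)
  -- support inclusions
  have hsubc' : c'.support ⊆ c.support := by
    intro x hx
    rw [Finsupp.mem_support_iff] at hx ⊢
    exact fun h => hx (Nat.le_antisymm (h ▸ Finsupp.le_def.mp hle x) (Nat.zero_le _))
  have hsubd : d.support ⊆ c.support := by
    intro x hx
    rw [Finsupp.mem_support_iff] at hx ⊢
    intro h
    apply hx
    rw [hd, Finsupp.tsub_apply, h]
    simp
  -- memberships
  have hcZ : c ∈ ZSet s := ⟨fun x hx => (hc x hx).1, hcs.symm⟩
  have hc'Z : c' ∈ ZSet s' := ⟨fun x hx => (hc x (hsubc' hx)).1, hs'.symm⟩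
  have hdZ : d ∈ ZSet r := ⟨fun x hx => (hc x (hsubd hx)).1, hr.symm⟩
  -- key class equalities
  have hsr : cls s = cls (s' + r) := by
    rw [hcs, ← hcd, phi_add, hc'Z.2, hdZ.2, cls_add]
  have hts : cls t = cls (t' + r) := by
    obtain ⟨u, hu⟩ := cls_eq_iff.mp hsr
    refine cls_eq_iff.mpr ⟨u, ?_⟩
    have : m + (t + u) = m + (t' + r) := by
      rw [← add_assoc, ht, ← add_assoc, ht', hu]
    exact add_left_cancel this
  have hL : lenL s = flen c' + flen d := by rw [← hclen, ← hcd, flen_add]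
  -- bounds for ZSet s'
  have hs'le : ∀ z ∈ ZSet s', flen z + flen d ≤ lenL s := by
    intro z hz
    have : z + d ∈ ZSet s := by
      rw [ZSet_congr hsr]
      exact mem_ZSet_add hz hdZ
    calc flen z + flen d = flen (z + d) := (flen_add z d).symm
      _ ≤ lenL s := flen_le_lenL hbdd this
  have hbdds' : BddAbove (flen '' ZSet s') := by
    refine ⟨lenL s, ?_⟩
    rintro _ ⟨z, hz, rfl⟩
    exact le_trans (Nat.le_add_right _ _) (hs'le z hz)
  have hLs' : lenL s' = flen c' := by
    obtain ⟨z1, hz1, hz1len⟩ := exists_lenL ⟨c', hc'Z⟩ hbdds'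
    have h1 : lenL s' + flen d ≤ flen c' + flen d := by
      rw [← hz1len, ← hL]; exact hs'le z1 hz1
    exact Nat.le_antisymm (Nat.le_of_add_le_add_right h1)
      (flen_le_lenL hbdds' hc'Z)
  have hLsum : lenL s = lenL t' + 1 + flen d := by
    rw [hL, ← hLs', hcontra]
  -- bound for ZSet t
  have hbddt : BddAbove (flen '' ZSet t) := by
    refine ⟨lenL s, ?_⟩
    rintro _ ⟨z, hz, rfl⟩
    have hmem : z + Finsupp.single (cls m) 1 ∈ ZSet s := by
      rw [ZSet_congr (show cls s = cls (t + m) by rw [← ht, add_comm])]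
      exact mem_ZSet_add hz (single_mem_ZSet hm)
    have := flen_le_lenL hbdd hmem
    rw [flen_add, flen_single] at this
    exact le_trans (Nat.le_add_right _ _) this
  by_cases hnet' : (ZSet t').Nonempty
  · -- bound for ZSet t'
    have hbddt' : BddAbove (flen '' ZSet t') := by
      refine ⟨lenL s, ?_⟩
      rintro _ ⟨z, hz, rfl⟩
      have hmem : z + Finsupp.single (cls m) 1 + d ∈ ZSet s := by
        rw [ZSet_congr (show cls s = cls (t' + m + r) by
          rw [hsr, add_comm t' m, ht'])]
        exact mem_ZSet_add (mem_ZSet_add hz (single_mem_ZSet hm)) hdZ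
      have := flen_le_lenL hbdd hmem
      rw [flen_add, flen_add, flen_single] at this
      omega
    obtain ⟨z2, hz2, hz2len⟩ := exists_lenL hnet' hbddt'
    have hlow : lenL t' + flen d ≤ lenL t := by
      have hmem : z2 + d ∈ ZSet t := by
        rw [ZSet_congr hts]
        exact mem_ZSet_add hz2 hdZ
      have := flen_le_lenL hbddt hmem
      rw [flen_add, hz2len] at this
      exact this
    have hhigh : lenL t ≤ lenL t' + flen d := by
      refine lenL_le fun z hz => ?_
      have hmem : z + Finsupp.single (cls m) 1 ∈ ZSet s := by
        rw [ZSet_congr (show cls s = cls (t + m) by rw [← ht, add_comm])]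
        exact mem_ZSet_add hz (single_mem_ZSet hm)
      have := flen_le_lenL hbdd hmem
      rw [flen_add, flen_single, hLsum] at this
      omega
    apply hne
    rw [hLsum, Nat.le_antisymm hhigh hlow]
    omega
  · -- ZSet t' is empty
    have hZt' : ZSet t' = ∅ := Set.not_nonempty_iff_eq_empty.mp hnet'
    have hLt'0 : lenL t' = 0 := by
      rw [lenL, hZt', Set.image_empty, csSup_empty]; rfl
    have hflenc' : flen c' = 1 := by rw [← hLs', hcontra, hLt'0]
    -- c' is a single atom
    have hsupp_ne : c'.support.Nonempty := by
      rw [Finsupp.support_nonempty_iff]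
      intro h
      rw [h] at hflenc'
      simp [flen] at hflenc'
    obtain ⟨x, hx⟩ := hsupp_ne
    have hc'x : c' x = 1 := by
      have h1 : 1 ≤ c' x := Nat.one_le_iff_ne_zero.mpr (Finsupp.mem_support_iff.mp hx)
      have h2 : c' x ≤ flen c' :=
        Finset.single_le_sum (fun _ _ => Nat.zero_le _) hx
      omega
    have hc'single : c' = Finsupp.single x 1 := by
      ext y
      by_cases hy : y = x
      · subst hy; simp [hc'x]
      · rw [Finsupp.single_eq_of_ne' (fun h => hy h.symm)]
        by_contra h
        have hy' : y ∈ c'.support := Finsupp.mem_support_iff.mpr h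
        have hsub : ({x, y} : Finset (Red S)) ⊆ c'.support := by
          intro z hz
          rcases Finset.mem_insert.mp hz with rfl | hz
          · exact hx
          · rw [Finset.mem_singleton] at hz; subst hz; exact hy'
        have := Finset.sum_le_sum_of_subset (f := fun z => c' z) hsub
        rw [Finset.sum_pair (fun h => hy h.symm)] at this
        have : c' x + c' y ≤ flen c' := this
        omega
    have hxs' : cls s' = x := by
      rw [hs', hc'single, phi_single, one_nsmul]
    have hxatom : IsAddAtom x := (hc x (hsubc' hx)).1
    have hxne : x ≠ cls m := (hc x (hsubc' hx)).2
    have hsplit : cls m + cls t' = x := by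
      rw [← hxs', ← cls_add, ht']
    rcases hxatom.2.2 _ _ hsplit with h | h
    · exact hm.2.1 (isAddUnit_of_cls h)
    · apply hxne
      rw [← hsplit, red_unit_eq_zero h, add_zero]

theorem statement2 {S : Type*} [AddCancelCommMonoid S] (s m t : S)
    (hm : IsAddAtom m) (ht : m + t = s) (hfin : LFinite s)
    (hne : lenL s ≠ lenL t + 1) :
    ∀ c : Red S →₀ ℕ, (∀ x ∈ c.support, IsAddAtom x ∧ x ≠ cls m) →
      cls s = phi c → flen c = lenL s →
      ∀ c' ∈ MinReplSet m, c' ≤ c →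
        ∀ s' t' : S, cls s' = phi c' → m + t' = s' → lenL s' ≠ lenL t' + 1 :=
  statement2' s m t hm ht hfin hne

end Paper
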